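/- Let m ∈ ℕ, ξ ∈ ℕ with ξ ≥ 2, and define a_{m,ξ}(x) = (-1)^m ξ^{m+1} e^{-(ξ-1)x²} L_m(ξ x²), where L_m is the m-th Laguerre polynomial. Then the eigenvalue sequence γ_{a_{m,ξ}}(n) = (1/n!) ∫₀^∞ a_{m,ξ}(√r) e^{-r} r^n dr satisfies γ_{a_{m,ξ}}(n) = 0 for n < m and γ_{a_{m,ξ}}(n) = C(n,m)·ξ^{-(n-m)} for n ≥ m. -/

import Mathlib

open Polynomial Finset MeasureTheory Real Set

theorem alt_choose_sum (n m : ℕ) :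
    ∑ k ∈ Finset.range (m+1), (-1:ℤ)^k * (m.choose k) * ((n+k).choose k)
      = (-1)^m * n.choose m := by
  have hpoly : ∑ k ∈ Finset.range (m+1),
      Polynomial.C ((-1:ℤ)^k * (m.choose k : ℤ)) * (X+1)^(n+k)
      = Polynomial.C ((-1:ℤ)^m) * ((X+1)^n * X^m) := by
    have h := add_pow (-(X+1) : ℤ[X]) 1 m
    have h2 : (-(X+1) + 1 : ℤ[X]) = -X := by ring
    rw [h2] at h
    calc ∑ k ∈ Finset.range (m+1), Polynomial.C ((-1:ℤ)^k * (m.choose k : ℤ)) * (X+1)^(n+k)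
        = (∑ k ∈ Finset.range (m+1), (-(X+1):ℤ[X])^k * 1^(m-k) * (m.choose k : ℤ[X])) * (X+1)^n := by
          rw [Finset.sum_mul]
          refine Finset.sum_congr rfl fun k _ => ?_
          rw [show (-(X+1) : ℤ[X]) = (-1) * (X+1) by ring, mul_pow]
          simp only [map_mul, map_pow, map_neg, map_one, map_natCast]
          ring
      _ = (-X:ℤ[X])^m * (X+1)^n := by rw [← h]
      _ = Polynomial.C ((-1:ℤ)^m) * ((X+1)^n * X^m) := by
          simp only [map_pow, map_neg, map_one]; ring
  have hc := congrArg (fun p : ℤ[X] => p.coeff n) hpoly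
  simp only [Polynomial.finset_sum_coeff, Polynomial.coeff_C_mul,
    Polynomial.coeff_mul_X_pow', Polynomial.coeff_X_add_one_pow, Int.cast_id] at hc
  have hsymm : ∀ k, (((n+k).choose k : ℤ)) = ((n+k).choose n : ℤ) := by
    intro k; rw [Nat.choose_symm_add]
  simp only [hsymm]
  rw [hc]
  by_cases hmn : m ≤ n
  · rw [if_pos hmn, Nat.choose_symm hmn]
  · rw [if_neg hmn, Nat.choose_eq_zero_of_lt (by omega), mul_zero, Nat.cast_zero, mul_zero]

theorem integrableOn_pow_mul_exp (N : ℕ) {b : ℝ} (hb : 0 < b) :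
    IntegrableOn (fun t : ℝ => t ^ N * Real.exp (-b * t)) (Set.Ioi 0) := by
  have h := integrableOn_rpow_mul_exp_neg_mul_rpow (p := 1) (s := N) (b := b)
    (lt_of_lt_of_le neg_one_lt_zero (Nat.cast_nonneg N)) zero_lt_one hb
  simpa [Real.rpow_natCast, Real.rpow_one] using h

theorem integral_pow_mul_exp (N : ℕ) {b : ℝ} (hb : 0 < b) :
    ∫ t in Set.Ioi (0:ℝ), t ^ N * Real.exp (-b * t)
      = (N.factorial : ℝ) / b ^ (N+1) := by
  have h := Real.integral_rpow_mul_exp_neg_mul_Ioi (a := N + 1) (r := b)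
    (by positivity) hb
  rw [show ((N:ℝ) + 1 - 1) = (N:ℝ) by ring] at h
  rw [show ((N:ℝ) + 1) = ((N + 1 : ℕ) : ℝ) by push_cast; ring] at h
  rw [Real.rpow_natCast] at h
  rw [show ((N + 1 : ℕ) : ℝ) = (N:ℝ) + 1 by push_cast; ring, Real.Gamma_nat_eq_factorial] at h
  calc ∫ t in Set.Ioi (0:ℝ), t ^ N * Real.exp (-b * t)
      = ∫ t in Set.Ioi (0:ℝ), t ^ (N:ℝ) * Real.exp (-(b * t)) := by
        refine setIntegral_congr_fun measurableSet_Ioi fun t ht => ?_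
        rw [Real.rpow_natCast, neg_mul]
    _ = (1 / b) ^ (N + 1) * N.factorial := h
    _ = (N.factorial : ℝ) / b ^ (N+1) := by
        rw [div_pow, one_pow]; ring

theorem gamma_of_laguerre_symbol (m : ℕ) (ξ : ℕ) (hξ : 2 ≤ ξ) (n : ℕ) :
    (1 / (Nat.factorial n : ℝ)) *
      ∫ r in Set.Ioi (0 : ℝ),
        ((-1 : ℝ) ^ m * (ξ : ℝ) ^ (m + 1) *
            Real.exp (-((ξ : ℝ) - 1) * (Real.sqrt r) ^ 2) *
            ∑ k ∈ Finset.range (m + 1),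
              (-1 : ℝ) ^ k * (Nat.choose m k : ℝ) *
                ((ξ : ℝ) * (Real.sqrt r) ^ 2) ^ k / (Nat.factorial k : ℝ)) *
          Real.exp (-r) * r ^ n
    = if n < m then 0 else (Nat.choose n m : ℝ) / (ξ : ℝ) ^ (n - m) := by
  have hξ0 : (0:ℝ) < (ξ:ℝ) := by exact_mod_cast (by omega : 0 < ξ)
  have hξne : (ξ:ℝ) ≠ 0 := ne_of_gt hξ0
  set c : ℕ → ℝ := fun k =>
    (-1:ℝ)^m * (ξ:ℝ)^(m+1) * ((-1:ℝ)^k * (Nat.choose m k : ℝ) * (ξ:ℝ)^k / (Nat.factorial k : ℝ))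
    with hc
  have step1 : (∫ r in Set.Ioi (0 : ℝ),
        ((-1 : ℝ) ^ m * (ξ : ℝ) ^ (m + 1) *
            Real.exp (-((ξ : ℝ) - 1) * (Real.sqrt r) ^ 2) *
            ∑ k ∈ Finset.range (m + 1),
              (-1 : ℝ) ^ k * (Nat.choose m k : ℝ) *
                ((ξ : ℝ) * (Real.sqrt r) ^ 2) ^ k / (Nat.factorial k : ℝ)) *
          Real.exp (-r) * r ^ n)
      = ∫ r in Set.Ioi (0:ℝ), ∑ k ∈ Finset.range (m+1),
          c k * (r ^ (n+k) * Real.exp (-(ξ:ℝ) * r)) := by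
    refine setIntegral_congr_fun measurableSet_Ioi fun r hr => ?_
    rw [Real.sq_sqrt (le_of_lt hr)]
    have hexp : Real.exp (-((ξ:ℝ) - 1) * r) * Real.exp (-r) = Real.exp (-(ξ:ℝ) * r) := by
      rw [← Real.exp_add]; congr 1; ring
    simp only [Finset.mul_sum, Finset.sum_mul]
    refine Finset.sum_congr rfl fun k _ => ?_
    rw [hc, ← hexp, mul_pow]
    ring
  rw [step1]
  rw [MeasureTheory.integral_finset_sum _ (fun k _ =>
    ((integrableOn_pow_mul_exp (n+k) hξ0).const_mul (c k)))]
  simp_rw [MeasureTheory.integral_const_mul, integral_pow_mul_exp _ hξ0]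
  rw [Finset.mul_sum]
  have hterm : ∀ k ∈ Finset.range (m+1),
      (1 / (Nat.factorial n : ℝ)) * (c k * ((Nat.factorial (n+k) : ℝ) / (ξ:ℝ)^(n+k+1)))
      = ((ξ:ℝ)^m / (ξ:ℝ)^n * (-1:ℝ)^m) *
          ((-1:ℝ)^k * (Nat.choose m k : ℝ) * (Nat.choose (n+k) k : ℝ)) := by
    intro k _
    have hfact : ((Nat.factorial (n+k) : ℝ)) =
        (Nat.choose (n+k) k : ℝ) * (Nat.factorial k : ℝ) * (Nat.factorial n : ℝ) := by
      have h := Nat.choose_mul_factorial_mul_factorial (Nat.le_add_left k n)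
      rw [Nat.add_sub_cancel] at h
      exact_mod_cast h.symm
    have hn : (Nat.factorial n : ℝ) ≠ 0 := Nat.cast_ne_zero.mpr (Nat.factorial_ne_zero n)
    have hk : (Nat.factorial k : ℝ) ≠ 0 := Nat.cast_ne_zero.mpr (Nat.factorial_ne_zero k)
    rw [hc, hfact]
    field_simp
    ring
  rw [Finset.sum_congr rfl hterm, ← Finset.mul_sum]
  have hsum : (∑ k ∈ Finset.range (m+1),
      (-1:ℝ)^k * (Nat.choose m k : ℝ) * (Nat.choose (n+k) k : ℝ))
      = (-1:ℝ)^m * (Nat.choose n m : ℝ) := by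
    exact_mod_cast congrArg (fun z : ℤ => (z : ℝ)) (alt_choose_sum n m)
  rw [hsum]
  have hmm : ((-1:ℝ)^m * ((-1:ℝ)^m * (Nat.choose n m : ℝ)))
      = (Nat.choose n m : ℝ) := by
    rw [← mul_assoc, ← mul_pow]; norm_num
  rw [mul_assoc, hmm]
  by_cases hnm : n < m
  · rw [if_pos hnm, Nat.choose_eq_zero_of_lt hnm, Nat.cast_zero, mul_zero]
  · rw [if_neg hnm]
    have h1 : (ξ:ℝ)^(n-m) * (ξ:ℝ)^m = (ξ:ℝ)^n := by
      rw [← pow_add]; congr 1; omega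
    have h2 : (ξ:ℝ)^(n-m) ≠ 0 := pow_ne_zero _ hξne
    have h3 : (ξ:ℝ)^n ≠ 0 := pow_ne_zero _ hξne
    field_simp
    linear_combination (Nat.choose n m : ℝ) * h1
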